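/- Let G be a 4-Ore graph not isomorphic to K4. Then for every vertex v of G, there exists a nontrivial cocollapsible subset of V(G) contained in V(G)∖{v}. -/

import Mathlib

open SimpleGraph

/-- The degree of a vertex, as the cardinality of its neighbor set. -/
noncomputable def deg {V : Type} (G : SimpleGraph V) (v : V) : ℕ :=
  Nat.card (G.neighborSet v)

/-- The number of edges of a graph. -/
noncomputable def numEdges {V : Type} (G : SimpleGraph V) : ℕ :=
  Nat.card G.edgeSet

/-- The independence number of a graph. -/
noncomputable def indepNum {V : Type} (G : SimpleGraph V) : ℕ :=
  sSup {n | ∃ s : Set V, (∀ u ∈ s, ∀ v ∈ s, ¬ G.Adj u v) ∧ s.ncard = n}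

/-- The set of vertices of degree at most three. -/
noncomputable def D3set {V : Type} (G : SimpleGraph V) : Set V :=
  {v | deg G v ≤ 3}

/-- `D3(G)`: the subgraph induced by the vertices of degree at most three. -/
noncomputable def D3 {V : Type} (G : SimpleGraph V) : SimpleGraph (D3set G) :=
  G.induce (D3set G)

/-- The potential of a graph: `p(G) = 4.8 |V(G)| - 3 |E(G)| + 0.6 α(D3(G))`. -/
noncomputable def potential {V : Type} (G : SimpleGraph V) : ℚ :=
  (24/5 : ℚ) * Nat.card V - 3 * numEdges G + (3/5 : ℚ) * _root_.indepNum (D3 G)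

/-- The potential of a subset `R` of the vertices of `G`:
`p(R) = 4.8 |R| - 3 |E(G[R])| + 0.6 α(G[D3(G) ∩ R])`. -/
noncomputable def potentialOf {V : Type} (G : SimpleGraph V) (R : Set V) : ℚ :=
  (24/5 : ℚ) * R.ncard - 3 * numEdges (G.induce R)
    + (3/5 : ℚ) * _root_.indepNum (G.induce (D3set G ∩ R))

/-- A graph is `k`-critical if it is not `(k-1)`-colorable but every proper
subgraph is `(k-1)`-colorable. -/
def IsKCritical {V : Type} (G : SimpleGraph V) (k : ℕ) : Prop :=
  ¬ G.Colorable (k - 1) ∧ ∀ H : SimpleGraph V, H ≤ G → H ≠ G → H.Colorable (k - 1)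

/-- A graph has Ore-degree at most `d` if `d(u) + d(v) ≤ d` for every edge `uv`. -/
def OreDegreeAtMost {V : Type} (G : SimpleGraph V) (d : ℕ) : Prop :=
  ∀ u v, G.Adj u v → deg G u + deg G v ≤ d

/-- The Ore-composition of `G1` (edge-side, with replaced edge `xy`) and `G2`
(split-side, with split vertex `z` whose incident edges going to `A` are attached
to `x` and the remaining ones to `y`). -/
def oreCompose {V1 V2 : Type} (G1 : SimpleGraph V1) (G2 : SimpleGraph V2)
    (x y : V1) (z : V2) (A : Set V2) :
    SimpleGraph (V1 ⊕ {v : V2 // v ≠ z}) :=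
  SimpleGraph.fromRel (fun a b =>
    match a, b with
    | Sum.inl u, Sum.inl v =>
        G1.Adj u v ∧ ¬((u = x ∧ v = y) ∨ (u = y ∧ v = x))
    | Sum.inl u, Sum.inr v =>
        (u = x ∧ G2.Adj z v.1 ∧ v.1 ∈ A) ∨ (u = y ∧ G2.Adj z v.1 ∧ v.1 ∉ A)
    | Sum.inr _, Sum.inl _ => False
    | Sum.inr u, Sum.inr v => G2.Adj u.1 v.1)

/-- `G` is an Ore-composition of `G1` and `G2`: there are a replaced edge `xy` of
`G1`, a split vertex `z` of `G2`, and a splitting of the edges at `z` into two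
nonempty parts, such that `G` is isomorphic to the resulting composition. -/
def IsOreComposition {V V1 V2 : Type} (G : SimpleGraph V)
    (G1 : SimpleGraph V1) (G2 : SimpleGraph V2) : Prop :=
  ∃ (x y : V1) (z : V2) (A : Set V2),
    G1.Adj x y ∧ (∃ p, G2.Adj z p ∧ p ∈ A) ∧ (∃ q, G2.Adj z q ∧ q ∉ A) ∧
    Nonempty (G ≃g oreCompose G1 G2 x y z A)

/-- The family of `4`-Ore graphs: the smallest family of graphs containing `K4`
and closed under Ore-compositions. -/
inductive IsFourOre : ∀ {V : Type}, SimpleGraph V → Prop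
  | k4 {V : Type} (G : SimpleGraph V) :
      Nonempty (G ≃g completeGraph (Fin 4)) → IsFourOre G
  | comp {V V1 V2 : Type} (G : SimpleGraph V)
      (G1 : SimpleGraph V1) (G2 : SimpleGraph V2) :
      IsFourOre G1 → IsFourOre G2 → IsOreComposition G G1 G2 → IsFourOre G

/-- The boundary of a set `R`: the vertices of `R` with a neighbor outside `R`. -/
def boundary {V : Type} (G : SimpleGraph V) (R : Set V) : Set V :=
  {v | v ∈ R ∧ ∃ u, u ∉ R ∧ G.Adj v u}

/-- A proper subset `R` of the vertices with `|R| ≥ 2` is collapsible if in every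
proper 3-coloring of `G[R]` all vertices of the boundary of `R` get the same color. -/
def Collapsible {V : Type} (G : SimpleGraph V) (R : Set V) : Prop :=
  R ≠ Set.univ ∧ 2 ≤ R.ncard ∧
  ∀ φ : V → Fin 3, (∀ u ∈ R, ∀ v ∈ R, G.Adj u v → φ u ≠ φ v) →
    ∀ u ∈ boundary G R, ∀ v ∈ boundary G R, φ u = φ v

/-- The critical complement of a set `R`: identify the boundary of `R` to a single
vertex (the vertex `none`) and delete the rest of `R`. -/
def criticalComplement {V : Type} (G : SimpleGraph V) (R : Set V) :
    SimpleGraph (Option {v : V // v ∉ R}) :=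
  SimpleGraph.fromRel (fun a b =>
    match a, b with
    | some u, some v => G.Adj u.1 v.1
    | some u, none => ∃ w ∈ boundary G R, G.Adj u.1 w
    | none, some _ => False
    | none, none => False)

/-- A nonempty proper subset `R` with boundary `S` is cocollapsible if every vertex
of `S` has exactly one neighbor outside `R`, and for every non-constant list of
forbidden colors on `S` there is a proper 3-coloring of `G[R]` avoiding them. -/
def Cocollapsible {V : Type} (G : SimpleGraph V) (R : Set V) : Prop :=
  R.Nonempty ∧ R ≠ Set.univ ∧
  (∀ v ∈ boundary G R, ∃! u, u ∉ R ∧ G.Adj v u) ∧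
  ∀ f : V → Fin 3,
    (∃ u ∈ boundary G R, ∃ v ∈ boundary G R, f u ≠ f v) →
    ∃ φ : V → Fin 3, (∀ u ∈ R, ∀ v ∈ R, G.Adj u v → φ u ≠ φ v) ∧
      ∀ v ∈ boundary G R, φ v ≠ f v

/-- A cocollapsible set is nontrivial if its complement has more than one vertex. -/
def NontrivialCocollapsible {V : Type} (G : SimpleGraph V) (R : Set V) : Prop :=
  Cocollapsible G R ∧ 1 < (Rᶜ : Set V).ncard

/-- The graph `H` together with the (possibly new) edge `uv`. -/
def withEdge {W : Type} (H : SimpleGraph W) (u v : W) : SimpleGraph W :=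
  H ⊔ SimpleGraph.fromEdgeSet {s(u, v)}

/-- A collapsible set `R` is tight if for any two distinct boundary vertices `u, v`
the graph `G[R] + uv` is `4`-critical. -/
def TightCollapsible {V : Type} (G : SimpleGraph V) (R : Set V) : Prop :=
  Collapsible G R ∧
  ∀ u (hu : u ∈ boundary G R) v (hv : v ∈ boundary G R), u ≠ v →
    IsKCritical (withEdge (G.induce R) ⟨u, hu.1⟩ ⟨v, hv.1⟩) 4

/-- `s(H) = |E(H)| - |V(H)| + α(H)`. -/
noncomputable def sVal {V : Type} (H : SimpleGraph V) : ℤ :=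
  (numEdges H : ℤ) - (Nat.card V : ℤ) + (_root_.indepNum H : ℤ)

/-- `H7`: the unique Ore-composition of two copies of `K4`. Vertices `0,1,2,3`
form the edge-side `K4` with replaced edge `01`; the split vertex of the second
`K4` on `{z,4,5,6}` is split so that `0` gets the edge to `4` and `1` gets the
edges to `5` and `6`. -/
def H7 : SimpleGraph (Fin 7) :=
  SimpleGraph.fromRel (fun a b =>
    ((a, b) : Fin 7 × Fin 7) ∈
      ([(0, 2), (0, 3), (1, 2), (1, 3), (2, 3), (4, 5), (4, 6), (5, 6),
        (0, 4), (1, 5), (1, 6)] : List (Fin 7 × Fin 7)))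

/-- A diamond in `G`: a subgraph isomorphic to `K4` minus an edge whose two
vertices of degree three within the subgraph (`w1` and `w2`) also have degree
three in `G`.  The vertices `e1` and `e2` are the ends of the diamond. -/
def IsDiamond {V : Type} (G : SimpleGraph V) (e1 e2 w1 w2 : V) : Prop :=
  e1 ≠ e2 ∧ e1 ≠ w1 ∧ e1 ≠ w2 ∧ e2 ≠ w1 ∧ e2 ≠ w2 ∧ w1 ≠ w2 ∧
  G.Adj w1 w2 ∧ G.Adj e1 w1 ∧ G.Adj e1 w2 ∧ G.Adj e2 w1 ∧ G.Adj e2 w2 ∧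
  deg G w1 = 3 ∧ deg G w2 = 3

/-- A triangle with a pendant edge. -/
def trianglePendant1 : SimpleGraph (Fin 4) :=
  SimpleGraph.fromRel (fun a b =>
    ((a, b) : Fin 4 × Fin 4) ∈ ([(0, 1), (1, 2), (2, 0), (0, 3)] : List (Fin 4 × Fin 4)))

/-- A triangle with a pendant path on two further vertices. -/
def trianglePendant2 : SimpleGraph (Fin 5) :=
  SimpleGraph.fromRel (fun a b =>
    ((a, b) : Fin 5 × Fin 5) ∈
      ([(0, 1), (1, 2), (2, 0), (0, 3), (3, 4)] : List (Fin 5 × Fin 5)))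
section PendantTriangle

variable {V : Type} (G : SimpleGraph V)

/-- A pendant triangle: a triangle each of whose vertices has exactly one
neighbor outside the triangle. -/
def PTri (a b c : V) : Prop :=
  G.Adj a b ∧ G.Adj b c ∧ G.Adj a c ∧
  ∀ t ∈ ({a, b, c} : Set V), ∃! u, u ∉ ({a, b, c} : Set V) ∧ G.Adj t u

variable {G}

lemma PTri.swap12 {a b c : V} (h : PTri G a b c) : PTri G b a c := by
  obtain ⟨h1, h2, h3, h4⟩ := h
  have hset : ({b, a, c} : Set V) = {a, b, c} := Set.insert_comm b a {c}
  exact ⟨h1.symm, h3, h2, by rw [hset]; exact h4⟩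

lemma PTri.swap23 {a b c : V} (h : PTri G a b c) : PTri G a c b := by
  obtain ⟨h1, h2, h3, h4⟩ := h
  have hset : ({a, c, b} : Set V) = {a, b, c} := by
    rw [Set.pair_comm c b]
  exact ⟨h3, h2.symm, h1, by rw [hset]; exact h4⟩

lemma PTri.rotate {a b c : V} (h : PTri G a b c) : PTri G b c a :=
  h.swap12.swap23

/-- Transport a pendant triangle through a graph isomorphism. -/
lemma PTri.map {W : Type} {H : SimpleGraph W} (e : G ≃g H) {a b c : V}
    (h : PTri G a b c) : PTri H (e a) (e b) (e c) := by
  obtain ⟨h1, h2, h3, h4⟩ := h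
  refine ⟨e.map_adj_iff.2 h1, e.map_adj_iff.2 h2, e.map_adj_iff.2 h3, ?_⟩
  intro t ht
  have hmem : ∀ w : W, w ∈ ({e a, e b, e c} : Set W) ↔ e.symm w ∈ ({a, b, c} : Set V) := by
    intro w
    simp only [Set.mem_insert_iff, Set.mem_singleton_iff]
    constructor
    · rintro (rfl | rfl | rfl) <;> simp
    · rintro (hw | hw | hw) <;>
      · rw [← e.apply_symm_apply w, hw]; simp
  obtain ⟨u, ⟨hu1, hu2⟩, huniq⟩ := h4 (e.symm t) ((hmem t).1 ht)
  refine ⟨e u, ⟨?_, ?_⟩, ?_⟩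
  · rw [hmem]; simpa using hu1
  · have := e.map_adj_iff.2 hu2
    rwa [e.apply_symm_apply] at this
  · intro w ⟨hw1, hw2⟩
    have : e.symm w = u := by
      apply huniq
      refine ⟨(hmem w).not.1 hw1, ?_⟩
      have : H.Adj t w := hw2
      rw [← e.apply_symm_apply t, ← e.apply_symm_apply w] at this
      exact e.map_adj_iff.1 this
    rw [← this, e.apply_symm_apply]

end PendantTriangle
section OreAdj

variable {V1 V2 : Type} {G1 : SimpleGraph V1} {G2 : SimpleGraph V2}
  {x y : V1} {z : V2} {A : Set V2}

lemma oreCompose_adj_inr_inr {u v : {v : V2 // v ≠ z}} :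
    (oreCompose G1 G2 x y z A).Adj (Sum.inr u) (Sum.inr v) ↔ G2.Adj u.1 v.1 := by
  rw [oreCompose, SimpleGraph.fromRel_adj]
  constructor
  · rintro ⟨-, h | h⟩
    · exact h
    · exact h.symm
  · intro h
    refine ⟨?_, Or.inl h⟩
    intro he
    have : u.1 = v.1 := by
      have := Sum.inr.inj he
      exact congrArg Subtype.val this
    exact G2.ne_of_adj h this

lemma oreCompose_adj_inl_inl {u v : V1} :
    (oreCompose G1 G2 x y z A).Adj (Sum.inl u) (Sum.inl v) ↔
      G1.Adj u v ∧ ¬((u = x ∧ v = y) ∨ (u = y ∧ v = x)) := by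
  rw [oreCompose, SimpleGraph.fromRel_adj]
  constructor
  · rintro ⟨-, ⟨h1, h2⟩ | ⟨h1, h2⟩⟩
    · exact ⟨h1, h2⟩
    · refine ⟨h1.symm, ?_⟩
      rintro (⟨rfl, rfl⟩ | ⟨rfl, rfl⟩)
      · exact h2 (Or.inr ⟨rfl, rfl⟩)
      · exact h2 (Or.inl ⟨rfl, rfl⟩)
  · rintro ⟨h1, h2⟩
    exact ⟨by simpa using G1.ne_of_adj h1, Or.inl ⟨h1, h2⟩⟩

lemma oreCompose_adj_inl_inr {u : V1} {v : {v : V2 // v ≠ z}} :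
    (oreCompose G1 G2 x y z A).Adj (Sum.inl u) (Sum.inr v) ↔
      ((u = x ∧ G2.Adj z v.1 ∧ v.1 ∈ A) ∨ (u = y ∧ G2.Adj z v.1 ∧ v.1 ∉ A)) := by
  rw [oreCompose, SimpleGraph.fromRel_adj]
  constructor
  · rintro ⟨-, h | h⟩
    · exact h
    · exact h.elim
  · intro h
    exact ⟨by simp, Or.inl h⟩

lemma oreCompose_adj_inr_inl {u : V1} {v : {v : V2 // v ≠ z}} :
    (oreCompose G1 G2 x y z A).Adj (Sum.inr v) (Sum.inl u) ↔
      ((u = x ∧ G2.Adj z v.1 ∧ v.1 ∈ A) ∨ (u = y ∧ G2.Adj z v.1 ∧ v.1 ∉ A)) := by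
  rw [SimpleGraph.adj_comm]
  exact oreCompose_adj_inl_inr

end OreAdj
section K4

variable {V : Type} {G : SimpleGraph V}

lemma K4_adj (g : G ≃g completeGraph (Fin 4)) : ∀ u v : V, G.Adj u v ↔ u ≠ v := by
  intro u v
  rw [← g.map_adj_iff]
  exact Iff.trans (SimpleGraph.top_adj _ _) g.toEquiv.injective.ne_iff

lemma K4_pt (g : G ≃g completeGraph (Fin 4)) (z : V) :
    ∃ a b c : V, PTri G a b c ∧ z ∉ ({a, b, c} : Set V) ∧
      (∀ s, G.Adj z s → s = a ∨ s = b ∨ s = c) := by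
  have hadj := K4_adj g
  set f : Fin 4 → V := fun j => g.symm (g z + j) with hf
  have hfinj : ∀ j k : Fin 4, f j = f k → j = k := by
    intro j k h
    have := g.symm.toEquiv.injective h
    exact add_left_cancel this
  have hf0 : f 0 = z := by
    simp only [hf, add_zero]
    exact g.toEquiv.symm_apply_apply z
  have huniv : ∀ u : V, u = f 0 ∨ u = f 1 ∨ u = f 2 ∨ u = f 3 := by
    intro u
    have hsum : ∀ p q : Fin 4, p + (q - p) = q := by decide
    have hu : u = f (g u - g z) := by
      simp only [hf, hsum]
      exact (g.toEquiv.symm_apply_apply u).symm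
    have hcase : ∀ j : Fin 4, j = 0 ∨ j = 1 ∨ j = 2 ∨ j = 3 := by decide
    rcases hcase (g u - g z) with h | h | h | h <;>
      rw [h] at hu <;> tauto
  refine ⟨f 1, f 2, f 3, ⟨?_, ?_, ?_, ?_⟩, ?_, ?_⟩
  · exact (hadj _ _).2 (fun h => by simpa using hfinj _ _ h)
  · exact (hadj _ _).2 (fun h => by simpa using hfinj _ _ h)
  · exact (hadj _ _).2 (fun h => by simpa using hfinj _ _ h)
  · intro t ht
    have htz : t ≠ z := by
      simp only [Set.mem_insert_iff, Set.mem_singleton_iff] at ht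
      rintro rfl
      rw [← hf0] at ht
      rcases ht with h | h | h <;> simpa using hfinj _ _ h
    refine ⟨z, ⟨?_, (hadj _ _).2 htz⟩, ?_⟩
    · simp only [Set.mem_insert_iff, Set.mem_singleton_iff]
      rintro (h | h | h) <;> rw [← hf0] at h <;> simpa using hfinj _ _ h.symm
    · rintro u ⟨hu1, hu2⟩
      simp only [Set.mem_insert_iff, Set.mem_singleton_iff] at hu1
      push_neg at hu1
      rcases huniv u with h | h | h | h
      · rw [h, hf0]
      · exact absurd h hu1.1
      · exact absurd h hu1.2.1
      · exact absurd h hu1.2.2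
  · simp only [Set.mem_insert_iff, Set.mem_singleton_iff]
    rintro (h | h | h) <;> rw [← hf0] at h <;> simpa using hfinj _ _ h
  · intro s hs
    have hsz : s ≠ z := fun h => G.loopless.irrefl z (h ▸ hs).symm
    rcases huniv s with h | h | h | h
    · rw [hf0] at h; exact absurd h hsz
    · exact Or.inl h
    · exact Or.inr (Or.inl h)
    · exact Or.inr (Or.inr h)

end K4
section Lift

variable {V1 V2 : Type} {G1 : SimpleGraph V1} {G2 : SimpleGraph V2}
  {x y : V1} {z : V2} {A : Set V2}

lemma lift_inr {a b c : V2} (h : PTri G2 a b c) (hz : z ∉ ({a, b, c} : Set V2))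
    (ha : a ≠ z) (hb : b ≠ z) (hc : c ≠ z) :
    PTri (oreCompose G1 G2 x y z A)
      (Sum.inr ⟨a, ha⟩) (Sum.inr ⟨b, hb⟩) (Sum.inr ⟨c, hc⟩) := by
  obtain ⟨h1, h2, h3, h4⟩ := h
  have hmem : ∀ u : {v : V2 // v ≠ z},
      (Sum.inr u : V1 ⊕ {v : V2 // v ≠ z}) ∈
        ({Sum.inr ⟨a, ha⟩, Sum.inr ⟨b, hb⟩, Sum.inr ⟨c, hc⟩} :
          Set (V1 ⊕ {v : V2 // v ≠ z})) ↔ u.1 ∈ ({a, b, c} : Set V2) := by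
    intro u
    simp [Subtype.ext_iff]
  have hmeml : ∀ s : V1,
      (Sum.inl s : V1 ⊕ {v : V2 // v ≠ z}) ∉
        ({Sum.inr ⟨a, ha⟩, Sum.inr ⟨b, hb⟩, Sum.inr ⟨c, hc⟩} :
          Set (V1 ⊕ {v : V2 // v ≠ z})) := by
    intro s; simp
  refine ⟨oreCompose_adj_inr_inr.2 h1, oreCompose_adj_inr_inr.2 h2,
    oreCompose_adj_inr_inr.2 h3, ?_⟩
  intro t ht
  obtain ⟨t', rfl⟩ : ∃ t' : {v : V2 // v ≠ z}, t = Sum.inr t' := by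
    rcases ht with h | h | h <;> exact ⟨_, h⟩
  have ht' : t'.1 ∈ ({a, b, c} : Set V2) := (hmem t').1 ht
  obtain ⟨u0, ⟨hu0out, hu0adj⟩, huniq⟩ := h4 t'.1 ht'
  by_cases hu0z : u0 = z
  · have hadjz : G2.Adj z t'.1 := hu0z ▸ hu0adj.symm
    by_cases hA : t'.1 ∈ A
    · refine ⟨Sum.inl x, ⟨hmeml x, oreCompose_adj_inr_inl.2 (Or.inl ⟨rfl, hadjz, hA⟩)⟩, ?_⟩
      rintro (s | s) ⟨huout, huadj⟩
      · rcases oreCompose_adj_inr_inl.1 huadj with ⟨rfl, -, -⟩ | ⟨rfl, -, hnA⟩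
        · rfl
        · exact absurd hA hnA
      · exfalso
        have hs : s.1 ∉ ({a, b, c} : Set V2) := fun hmem' => huout ((hmem s).2 hmem')
        have : s.1 = u0 := huniq s.1 ⟨hs, oreCompose_adj_inr_inr.1 huadj⟩
        exact s.2 (this.trans hu0z)
    · refine ⟨Sum.inl y, ⟨hmeml y, oreCompose_adj_inr_inl.2 (Or.inr ⟨rfl, hadjz, hA⟩)⟩, ?_⟩
      rintro (s | s) ⟨huout, huadj⟩
      · rcases oreCompose_adj_inr_inl.1 huadj with ⟨rfl, -, hA'⟩ | ⟨rfl, -, -⟩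
        · exact absurd hA' hA
        · rfl
      · exfalso
        have hs : s.1 ∉ ({a, b, c} : Set V2) := fun hmem' => huout ((hmem s).2 hmem')
        have : s.1 = u0 := huniq s.1 ⟨hs, oreCompose_adj_inr_inr.1 huadj⟩
        exact s.2 (this.trans hu0z)
  · refine ⟨Sum.inr ⟨u0, hu0z⟩, ⟨?_, oreCompose_adj_inr_inr.2 hu0adj⟩, ?_⟩
    · intro hmem'
      exact hu0out ((hmem ⟨u0, hu0z⟩).1 hmem')
    · rintro (s | s) ⟨huout, huadj⟩
      · exfalso
        have hadjz : G2.Adj z t'.1 := by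
          rcases oreCompose_adj_inr_inl.1 huadj with ⟨-, h', -⟩ | ⟨-, h', -⟩ <;> exact h'
        have : z = u0 := huniq z ⟨hz, hadjz.symm⟩
        exact hu0z this.symm
      · have hs : s.1 ∉ ({a, b, c} : Set V2) := fun hmem' => huout ((hmem s).2 hmem')
        have : s.1 = u0 := huniq s.1 ⟨hs, oreCompose_adj_inr_inr.1 huadj⟩
        simp [Subtype.ext_iff, this]

end Lift
section LiftInl

variable {V1 V2 : Type} {G1 : SimpleGraph V1} {G2 : SimpleGraph V2}
  {x y : V1} {z : V2} {A : Set V2}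

lemma lift_inl_A (hxy : G1.Adj x y) {a b c : V1} (h : PTri G1 a b c)
    (hy : y ∉ ({a, b, c} : Set V1))
    (hsing : ∃! a0, a0 ∈ A ∧ G2.Adj z a0) :
    PTri (oreCompose G1 G2 x y z A) (Sum.inl a) (Sum.inl b) (Sum.inl c) := by
  obtain ⟨h1, h2, h3, h4⟩ := h
  have hmem : ∀ s : V1,
      (Sum.inl s : V1 ⊕ {v : V2 // v ≠ z}) ∈
        ({Sum.inl a, Sum.inl b, Sum.inl c} : Set (V1 ⊕ {v : V2 // v ≠ z})) ↔
        s ∈ ({a, b, c} : Set V1) := by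
    intro s; simp
  have hmemr : ∀ s : {v : V2 // v ≠ z},
      (Sum.inr s : V1 ⊕ {v : V2 // v ≠ z}) ∉
        ({Sum.inl a, Sum.inl b, Sum.inl c} : Set (V1 ⊕ {v : V2 // v ≠ z})) := by
    intro s; simp
  have hnp : ∀ u v : V1, u ∈ ({a, b, c} : Set V1) → v ∈ ({a, b, c} : Set V1) →
      ¬((u = x ∧ v = y) ∨ (u = y ∧ v = x)) := by
    rintro u v hu hv (⟨-, rfl⟩ | ⟨rfl, -⟩)
    · exact hy hv
    · exact hy hu
  have hTa : a ∈ ({a, b, c} : Set V1) := by simp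
  have hTb : b ∈ ({a, b, c} : Set V1) := by simp
  have hTc : c ∈ ({a, b, c} : Set V1) := by simp
  refine ⟨oreCompose_adj_inl_inl.2 ⟨h1, hnp a b hTa hTb⟩,
    oreCompose_adj_inl_inl.2 ⟨h2, hnp b c hTb hTc⟩,
    oreCompose_adj_inl_inl.2 ⟨h3, hnp a c hTa hTc⟩, ?_⟩
  intro t ht
  obtain ⟨t', rfl⟩ : ∃ t' : V1, t = Sum.inl t' := by
    rcases ht with h | h | h <;> exact ⟨_, h⟩
  have ht' : t' ∈ ({a, b, c} : Set V1) := (hmem t').1 ht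
  obtain ⟨u0, ⟨hu0out, hu0adj⟩, huniq⟩ := h4 t' ht'
  by_cases htx : t' = x
  · subst htx
    have hu0y : u0 = y := (huniq y ⟨hy, hxy⟩).symm
    obtain ⟨a0, ⟨ha0A, ha0adj⟩, ha0uniq⟩ := hsing
    have ha0z : a0 ≠ z := fun hh => G2.loopless.irrefl z (hh ▸ ha0adj)
    refine ⟨Sum.inr ⟨a0, ha0z⟩, ⟨hmemr _, oreCompose_adj_inl_inr.2
      (Or.inl ⟨rfl, ha0adj, ha0A⟩)⟩, ?_⟩
    rintro (s | s) ⟨huout, huadj⟩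
    · exfalso
      obtain ⟨hadj', hnpair⟩ := oreCompose_adj_inl_inl.1 huadj
      have hsy : s ≠ y := fun hh => hnpair (Or.inl ⟨rfl, hh⟩)
      have hsout : s ∉ ({a, b, c} : Set V1) := fun hh => huout ((hmem s).2 hh)
      exact hsy ((huniq s ⟨hsout, hadj'⟩).trans hu0y)
    · rcases oreCompose_adj_inl_inr.1 huadj with ⟨-, hadj', hA'⟩ | ⟨hxy', -, -⟩
      · have : s.1 = a0 := ha0uniq s.1 ⟨hA', hadj'⟩
        simp [Subtype.ext_iff, this]
      · exact absurd hxy' (G1.ne_of_adj hxy)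
  · have hty : t' ≠ y := fun hh => hy (hh ▸ ht')
    refine ⟨Sum.inl u0, ⟨fun hh => hu0out ((hmem u0).1 hh),
      oreCompose_adj_inl_inl.2 ⟨hu0adj, ?_⟩⟩, ?_⟩
    · rintro (⟨rfl, -⟩ | ⟨rfl, -⟩)
      · exact htx rfl
      · exact hty rfl
    · rintro (s | s) ⟨huout, huadj⟩
      · obtain ⟨hadj', -⟩ := oreCompose_adj_inl_inl.1 huadj
        have hsout : s ∉ ({a, b, c} : Set V1) := fun hh => huout ((hmem s).2 hh)
        exact congrArg Sum.inl (huniq s ⟨hsout, hadj'⟩)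
      · exfalso
        rcases oreCompose_adj_inl_inr.1 huadj with ⟨h', -, -⟩ | ⟨h', -, -⟩
        · exact htx h'
        · exact hty h'

lemma lift_inl_B (hxy : G1.Adj x y) {a b c : V1} (h : PTri G1 a b c)
    (hx : x ∉ ({a, b, c} : Set V1))
    (hsing : ∃! b0, b0 ∉ A ∧ G2.Adj z b0) :
    PTri (oreCompose G1 G2 x y z A) (Sum.inl a) (Sum.inl b) (Sum.inl c) := by
  obtain ⟨h1, h2, h3, h4⟩ := h
  have hmem : ∀ s : V1,
      (Sum.inl s : V1 ⊕ {v : V2 // v ≠ z}) ∈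
        ({Sum.inl a, Sum.inl b, Sum.inl c} : Set (V1 ⊕ {v : V2 // v ≠ z})) ↔
        s ∈ ({a, b, c} : Set V1) := by
    intro s; simp
  have hmemr : ∀ s : {v : V2 // v ≠ z},
      (Sum.inr s : V1 ⊕ {v : V2 // v ≠ z}) ∉
        ({Sum.inl a, Sum.inl b, Sum.inl c} : Set (V1 ⊕ {v : V2 // v ≠ z})) := by
    intro s; simp
  have hnp : ∀ u v : V1, u ∈ ({a, b, c} : Set V1) → v ∈ ({a, b, c} : Set V1) →
      ¬((u = x ∧ v = y) ∨ (u = y ∧ v = x)) := by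
    rintro u v hu hv (⟨rfl, -⟩ | ⟨-, rfl⟩)
    · exact hx hu
    · exact hx hv
  have hTa : a ∈ ({a, b, c} : Set V1) := by simp
  have hTb : b ∈ ({a, b, c} : Set V1) := by simp
  have hTc : c ∈ ({a, b, c} : Set V1) := by simp
  refine ⟨oreCompose_adj_inl_inl.2 ⟨h1, hnp a b hTa hTb⟩,
    oreCompose_adj_inl_inl.2 ⟨h2, hnp b c hTb hTc⟩,
    oreCompose_adj_inl_inl.2 ⟨h3, hnp a c hTa hTc⟩, ?_⟩
  intro t ht
  obtain ⟨t', rfl⟩ : ∃ t' : V1, t = Sum.inl t' := by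
    rcases ht with h | h | h <;> exact ⟨_, h⟩
  have ht' : t' ∈ ({a, b, c} : Set V1) := (hmem t').1 ht
  obtain ⟨u0, ⟨hu0out, hu0adj⟩, huniq⟩ := h4 t' ht'
  by_cases hty : t' = y
  · subst hty
    have hu0x : u0 = x := (huniq x ⟨hx, hxy.symm⟩).symm
    obtain ⟨b0, ⟨hb0A, hb0adj⟩, hb0uniq⟩ := hsing
    have hb0z : b0 ≠ z := fun hh => G2.loopless.irrefl z (hh ▸ hb0adj)
    refine ⟨Sum.inr ⟨b0, hb0z⟩, ⟨hmemr _, oreCompose_adj_inl_inr.2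
      (Or.inr ⟨rfl, hb0adj, hb0A⟩)⟩, ?_⟩
    rintro (s | s) ⟨huout, huadj⟩
    · exfalso
      obtain ⟨hadj', hnpair⟩ := oreCompose_adj_inl_inl.1 huadj
      have hsx : s ≠ x := fun hh => hnpair (Or.inr ⟨rfl, hh⟩)
      have hsout : s ∉ ({a, b, c} : Set V1) := fun hh => huout ((hmem s).2 hh)
      exact hsx ((huniq s ⟨hsout, hadj'⟩).trans hu0x)
    · rcases oreCompose_adj_inl_inr.1 huadj with ⟨hxy', -, -⟩ | ⟨-, hadj', hA'⟩
      · exact absurd hxy'.symm (G1.ne_of_adj hxy)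
      · have : s.1 = b0 := hb0uniq s.1 ⟨hA', hadj'⟩
        simp [Subtype.ext_iff, this]
  · have htx : t' ≠ x := fun hh => hx (hh ▸ ht')
    refine ⟨Sum.inl u0, ⟨fun hh => hu0out ((hmem u0).1 hh),
      oreCompose_adj_inl_inl.2 ⟨hu0adj, ?_⟩⟩, ?_⟩
    · rintro (⟨rfl, -⟩ | ⟨rfl, -⟩)
      · exact htx rfl
      · exact hty rfl
    · rintro (s | s) ⟨huout, huadj⟩
      · obtain ⟨hadj', -⟩ := oreCompose_adj_inl_inl.1 huadj
        have hsout : s ∉ ({a, b, c} : Set V1) := fun hh => huout ((hmem s).2 hh)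
        exact congrArg Sum.inl (huniq s ⟨hsout, hadj'⟩)
      · exfalso
        rcases oreCompose_adj_inl_inr.1 huadj with ⟨h', -, -⟩ | ⟨h', -, -⟩
        · exact htx h'
        · exact hty h'

end LiftInl
section Sing

variable {V : Type} {G : SimpleGraph V}

lemma PTri.nbr_three {a b c : V} (h : PTri G a b c) :
    ∃ u0, ∀ s, G.Adj a s → s = b ∨ s = c ∨ s = u0 := by
  obtain ⟨u0, -, huniq⟩ := h.2.2.2 a (by simp)
  refine ⟨u0, fun s hs => ?_⟩
  by_cases hsmem : s ∈ ({a, b, c} : Set V)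
  · rcases hsmem with rfl | rfl | rfl
    · exact absurd hs (G.loopless.irrefl _)
    · exact Or.inl rfl
    · exact Or.inr (Or.inl rfl)
  · exact Or.inr (Or.inr (huniq s ⟨hsmem, hs⟩))

lemma PTri.nbr_three_of_mem {a b c z : V} (h : PTri G a b c)
    (hz : z ∈ ({a, b, c} : Set V)) :
    ∃ t1 t2 t3, ∀ s, G.Adj z s → s = t1 ∨ s = t2 ∨ s = t3 := by
  rcases hz with hz | hz | hz
  · subst hz; obtain ⟨u0, h3⟩ := h.nbr_three; exact ⟨b, c, u0, h3⟩
  · subst hz; obtain ⟨u0, h3⟩ := h.swap12.nbr_three; exact ⟨a, c, u0, h3⟩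
  · subst hz; obtain ⟨u0, h3⟩ := h.rotate.rotate.nbr_three; exact ⟨a, b, u0, h3⟩

lemma sing_of_three {z t1 t2 t3 : V} {A : Set V}
    (hA : ∃ p, G.Adj z p ∧ p ∈ A) (hB : ∃ q, G.Adj z q ∧ q ∉ A)
    (h3 : ∀ s, G.Adj z s → s = t1 ∨ s = t2 ∨ s = t3) :
    (∃! a0, a0 ∈ A ∧ G.Adj z a0) ∨ (∃! b0, b0 ∉ A ∧ G.Adj z b0) := by
  obtain ⟨p, hpadj, hpA⟩ := hA
  obtain ⟨q, hqadj, hqA⟩ := hB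
  have key : ∀ t : V, (∀ s, G.Adj z s → s ∈ A → s = t) →
      (∃! a0, a0 ∈ A ∧ G.Adj z a0) :=
    fun t ht => ⟨p, ⟨hpA, hpadj⟩,
      fun a0 ha0 => (ht a0 ha0.2 ha0.1).trans (ht p hpadj hpA).symm⟩
  have key' : ∀ t : V, (∀ s, G.Adj z s → s ∉ A → s = t) →
      (∃! b0, b0 ∉ A ∧ G.Adj z b0) :=
    fun t ht => ⟨q, ⟨hqA, hqadj⟩,
      fun b0 hb0 => (ht b0 hb0.2 hb0.1).trans (ht q hqadj hqA).symm⟩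
  by_cases h1 : t1 ∈ A <;> by_cases h2 : t2 ∈ A <;> by_cases h3' : t3 ∈ A
  · rcases h3 q hqadj with rfl | rfl | rfl <;> [exact absurd h1 hqA;
      exact absurd h2 hqA; exact absurd h3' hqA]
  · refine Or.inr (key' t3 fun s hs hsA => ?_)
    rcases h3 s hs with rfl | rfl | rfl <;> [exact absurd h1 hsA;
      exact absurd h2 hsA; rfl]
  · refine Or.inr (key' t2 fun s hs hsA => ?_)
    rcases h3 s hs with rfl | rfl | rfl <;> [exact absurd h1 hsA; rfl;
      exact absurd h3' hsA]
  · refine Or.inl (key t1 fun s hs hsA => ?_)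
    rcases h3 s hs with rfl | rfl | rfl <;> [rfl; exact absurd hsA h2;
      exact absurd hsA h3']
  · refine Or.inr (key' t1 fun s hs hsA => ?_)
    rcases h3 s hs with rfl | rfl | rfl <;> [rfl; exact absurd h2 hsA;
      exact absurd h3' hsA]
  · refine Or.inl (key t2 fun s hs hsA => ?_)
    rcases h3 s hs with rfl | rfl | rfl <;> [exact absurd hsA h1; rfl;
      exact absurd hsA h3']
  · refine Or.inl (key t3 fun s hs hsA => ?_)
    rcases h3 s hs with rfl | rfl | rfl <;> [exact absurd hsA h1;
      exact absurd hsA h2; rfl]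
  · rcases h3 p hpadj with rfl | rfl | rfl <;> [exact absurd hpA h1;
      exact absurd hpA h2; exact absurd hpA h3']

end Sing
section Aux

lemma disj_map {W U : Type} (f : W → U) (hf : Function.Injective f)
    {a b c a' b' c' : W}
    (h : ∀ t, t ∈ ({a, b, c} : Set W) → t ∉ ({a', b', c'} : Set W)) :
    ∀ t, t ∈ ({f a, f b, f c} : Set U) → t ∉ ({f a', f b', f c'} : Set U) := by
  intro t ht ht'
  rcases ht with rfl | rfl | rfl
  · apply h a (by simp)
    rcases ht' with h' | h' | h' <;> simp [hf h']
  · apply h b (by simp)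
    rcases ht' with h' | h' | h' <;> simp [hf h']
  · apply h c (by simp)
    rcases ht' with h' | h' | h' <;> simp [hf h']

theorem fourOre_two_triangles {V : Type} (G : SimpleGraph V) (h : IsFourOre G) :
    Nonempty (G ≃g completeGraph (Fin 4)) ∨
    ∃ a b c a' b' c' : V, PTri G a b c ∧ PTri G a' b' c' ∧
      ∀ t, t ∈ ({a, b, c} : Set V) → t ∉ ({a', b', c'} : Set V) := by
  induction h with
  | k4 G hiso => exact Or.inl hiso
  | @comp V V1 V2 G G1 G2 h1 h2 hcomp ih1 ih2 =>
    right
    obtain ⟨x, y, z, A, hxy, hA, hB, ⟨e⟩⟩ := hcomp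
    -- Step A: find a pendant triangle of G2 avoiding z, plus (optionally) a
    -- second disjoint one avoiding z, or else a bound on the neighbors of z.
    have stepA :
        (∃ a b c, PTri G2 a b c ∧ z ∉ ({a, b, c} : Set V2) ∧
          ∃ t1 t2 t3, ∀ s, G2.Adj z s → s = t1 ∨ s = t2 ∨ s = t3) ∨
        (∃ a b c a' b' c', PTri G2 a b c ∧ PTri G2 a' b' c' ∧
          z ∉ ({a, b, c} : Set V2) ∧ z ∉ ({a', b', c'} : Set V2) ∧
          ∀ t, t ∈ ({a, b, c} : Set V2) → t ∉ ({a', b', c'} : Set V2)) := by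
      rcases ih2 with hg2 | ⟨a, b, c, a', b', c', hT, hT', hdisj⟩
      · obtain ⟨g2⟩ := hg2
        obtain ⟨a, b, c, hPT, hznot, h3⟩ := K4_pt g2 z
        exact Or.inl ⟨a, b, c, hPT, hznot, a, b, c, h3⟩
      · by_cases hzT : z ∈ ({a, b, c} : Set V2)
        · exact Or.inl ⟨a', b', c', hT', hdisj z hzT, hT.nbr_three_of_mem hzT⟩
        · by_cases hzT' : z ∈ ({a', b', c'} : Set V2)
          · exact Or.inl ⟨a, b, c, hT, hzT, hT'.nbr_three_of_mem hzT'⟩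
          · exact Or.inr ⟨a, b, c, a', b', c', hT, hT', hzT, hzT', hdisj⟩
    -- notation for the composed graph
    set H := oreCompose G1 G2 x y z A with hH
    have lift2 : ∀ (a b c : V2), PTri G2 a b c → z ∉ ({a, b, c} : Set V2) →
        ∃ a' b' c' : V1 ⊕ {v : V2 // v ≠ z},
          PTri H a' b' c' ∧
          (∀ t, t ∈ ({a', b', c'} : Set (V1 ⊕ {v : V2 // v ≠ z})) →
            ∃ u : {v : V2 // v ≠ z}, t = Sum.inr u ∧ u.1 ∈ ({a, b, c} : Set V2)) := by
      intro a b c hT hz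
      have ha : a ≠ z := fun hh => hz (by simp [← hh])
      have hb : b ≠ z := fun hh => hz (by simp [← hh])
      have hc : c ≠ z := fun hh => hz (by simp [← hh])
      refine ⟨Sum.inr ⟨a, ha⟩, Sum.inr ⟨b, hb⟩, Sum.inr ⟨c, hc⟩,
        lift_inr hT hz ha hb hc, ?_⟩
      intro t ht
      rcases ht with rfl | rfl | rfl
      · exact ⟨⟨a, ha⟩, rfl, by simp⟩
      · exact ⟨⟨b, hb⟩, rfl, by simp⟩
      · exact ⟨⟨c, hc⟩, rfl, by simp⟩
    -- produce two disjoint pendant triangles in H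
    have main : ∃ a b c a' b' c' : V1 ⊕ {v : V2 // v ≠ z},
        PTri H a b c ∧ PTri H a' b' c' ∧
        ∀ t, t ∈ ({a, b, c} : Set (V1 ⊕ {v : V2 // v ≠ z})) →
          t ∉ ({a', b', c'} : Set (V1 ⊕ {v : V2 // v ≠ z})) := by
      rcases stepA with ⟨a, b, c, hT, hz, t1, t2, t3, h3⟩ |
        ⟨a, b, c, a', b', c', hT, hT', hz, hz', hdisj⟩
      · -- need a triangle from the edge side
        obtain ⟨A1, A2, A3, hTA, hTAmem⟩ := lift2 a b c hT hz
        have hsing := sing_of_three hA hB h3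
        have stepB : ∃ p q r : V1, PTri H (Sum.inl p) (Sum.inl q) (Sum.inl r) := by
          rcases hsing with hsL | hsR
          · -- need a triangle of G1 avoiding y
            rcases ih1 with hg1 | ⟨p, q, r, p', q', r', hS, hS', hSdisj⟩
            · obtain ⟨g1⟩ := hg1
              obtain ⟨p, q, r, hS, hynot, -⟩ := K4_pt g1 y
              exact ⟨p, q, r, lift_inl_A hxy hS hynot hsL⟩
            · by_cases hyS : y ∈ ({p, q, r} : Set V1)
              · exact ⟨p', q', r', lift_inl_A hxy hS' (hSdisj y hyS) hsL⟩
              · exact ⟨p, q, r, lift_inl_A hxy hS hyS hsL⟩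
          · rcases ih1 with hg1 | ⟨p, q, r, p', q', r', hS, hS', hSdisj⟩
            · obtain ⟨g1⟩ := hg1
              obtain ⟨p, q, r, hS, hxnot, -⟩ := K4_pt g1 x
              exact ⟨p, q, r, lift_inl_B hxy hS hxnot hsR⟩
            · by_cases hxS : x ∈ ({p, q, r} : Set V1)
              · exact ⟨p', q', r', lift_inl_B hxy hS' (hSdisj x hxS) hsR⟩
              · exact ⟨p, q, r, lift_inl_B hxy hS hxS hsR⟩
        obtain ⟨p, q, r, hTB⟩ := stepB
        refine ⟨A1, A2, A3, Sum.inl p, Sum.inl q, Sum.inl r, hTA, hTB, ?_⟩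
        intro t ht htB
        obtain ⟨u, rfl, -⟩ := hTAmem t ht
        rcases htB with h' | h' | h' <;> simp at h'
      · -- both triangles from the split side
        obtain ⟨A1, A2, A3, hTA, hTAmem⟩ := lift2 a b c hT hz
        obtain ⟨B1, B2, B3, hTB, hTBmem⟩ := lift2 a' b' c' hT' hz'
        refine ⟨A1, A2, A3, B1, B2, B3, hTA, hTB, ?_⟩
        intro t ht ht'
        obtain ⟨u, rfl, hu⟩ := hTAmem t ht
        obtain ⟨u', heq, hu'⟩ := hTBmem _ ht'
        obtain rfl : u = u' := Sum.inr.inj heq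
        exact hdisj u.1 hu hu'
    -- transport back through the isomorphism
    obtain ⟨a, b, c, a', b', c', hTA, hTB, hdisj⟩ := main
    have e' : H ≃g G := e.symm
    exact ⟨e' a, e' b, e' c, e' a', e' b', e' c',
      hTA.map e', hTB.map e', disj_map e' e'.toEquiv.injective hdisj⟩

end Aux
section Final

lemma tri_color : ∀ fa fb fc : Fin 3, (fa ≠ fb ∨ fa ≠ fc ∨ fb ≠ fc) →
    ∃ p q r : Fin 3, p ≠ q ∧ p ≠ r ∧ q ≠ r ∧ p ≠ fa ∧ q ≠ fb ∧ r ≠ fc := by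
  decide

lemma ntc_of_PTri {V : Type} [Fintype V] {G : SimpleGraph V} {a b c d e : V}
    (h : PTri G a b c) (hd : d ∉ ({a, b, c} : Set V)) (he : e ∉ ({a, b, c} : Set V))
    (hde : d ≠ e) : NontrivialCocollapsible G {a, b, c} := by
  classical
  obtain ⟨h1, h2, h3, h4⟩ := h
  have hab : a ≠ b := G.ne_of_adj h1
  have hbc : b ≠ c := G.ne_of_adj h2
  have hac : a ≠ c := G.ne_of_adj h3
  constructor
  · refine ⟨⟨a, by simp⟩, ?_, ?_, ?_⟩
    · intro hEq
      exact hd (hEq ▸ Set.mem_univ d)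
    · intro v hv
      exact h4 v hv.1
    · intro f ⟨u, hu, w, hw, hfuw⟩
      have hne : f a ≠ f b ∨ f a ≠ f c ∨ f b ≠ f c := by
        have hu1 : u ∈ ({a, b, c} : Set V) := hu.1
        have hw1 : w ∈ ({a, b, c} : Set V) := hw.1
        rcases hu1 with h | h | h <;> rcases hw1 with h' | h' | h' <;>
          rw [h, h'] at hfuw <;>
          first
            | exact absurd rfl hfuw
            | exact Or.inl hfuw
            | exact Or.inl hfuw.symm
            | exact Or.inr (Or.inl hfuw)
            | exact Or.inr (Or.inl hfuw.symm)
            | exact Or.inr (Or.inr hfuw)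
            | exact Or.inr (Or.inr hfuw.symm)
      obtain ⟨p, q, r, hpq, hpr, hqr, hpa, hqb, hrc⟩ := tri_color _ _ _ hne
      set φ : V → Fin 3 := fun t => if t = a then p else if t = b then q else r with hφ
      have eva : φ a = p := by simp [hφ]
      have evb : φ b = q := by simp [hφ, hab.symm]
      have evc : φ c = r := by simp [hφ, hac.symm, hbc.symm]
      refine ⟨φ, ?_, ?_⟩
      · intro u' hu' v' hv' hadj
        have huv : u' ≠ v' := G.ne_of_adj hadj
        rcases hu' with h | h | h <;> rcases hv' with h' | h' | h' <;>
          first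
            | exact absurd (h.trans h'.symm) huv
            | (rw [h, h', eva, evb]; exact hpq)
            | (rw [h, h', eva, evc]; exact hpr)
            | (rw [h, h', evb, evc]; exact hqr)
            | (rw [h, h', evb, eva]; exact hpq.symm)
            | (rw [h, h', evc, eva]; exact hpr.symm)
            | (rw [h, h', evc, evb]; exact hqr.symm)
      · intro v' hv'
        rcases hv'.1 with h | h | h <;> rw [h]
        · rw [eva]; exact hpa
        · rw [evb]; exact hqb
        · rw [evc]; exact hrc
  · have hsub : ({d, e} : Set V) ⊆ ({a, b, c} : Set V)ᶜ := by
      intro t ht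
      rcases ht with h | h <;> rw [h]
      · exact hd
      · exact he
    have h2' : ({d, e} : Set V).ncard = 2 := Set.ncard_pair hde
    calc 1 < 2 := one_lt_two
      _ = ({d, e} : Set V).ncard := h2'.symm
      _ ≤ (({a, b, c} : Set V)ᶜ).ncard := Set.ncard_le_ncard hsub (Set.toFinite _)

end Final
/-- Let `G` be a `4`-Ore graph not isomorphic to `K4`. Then for
every vertex `v` of `G`, there exists a nontrivial cocollapsible subset of
`V(G)` contained in `V(G) ∖ {v}`. -/
theorem statement_14 {V : Type} [Fintype V] (G : SimpleGraph V)
    (hOre : IsFourOre G) (hK4 : ¬ Nonempty (G ≃g completeGraph (Fin 4)))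
    (v : V) :
    ∃ R : Set V, NontrivialCocollapsible G R ∧ v ∉ R := by
  rcases fourOre_two_triangles G hOre with hiso | ⟨a, b, c, a', b', c', hT, hT', hdisj⟩
  · exact absurd hiso hK4
  have ha' : a' ∉ ({a, b, c} : Set V) := fun hh => hdisj a' hh (by simp)
  have hb' : b' ∉ ({a, b, c} : Set V) := fun hh => hdisj b' hh (by simp)
  have hab' : a' ≠ b' := G.ne_of_adj hT'.1
  by_cases hv : v ∈ ({a, b, c} : Set V)
  · refine ⟨{a', b', c'}, ?_, hdisj v hv⟩
    have hab : a ≠ b := G.ne_of_adj hT.1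
    exact ntc_of_PTri hT' (fun hh => hdisj a (by simp) hh)
      (fun hh => hdisj b (by simp) hh) hab
  · exact ⟨{a, b, c}, ntc_of_PTri hT ha' hb' hab', hv⟩
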